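/- arXiv:2211.11729 — 2 statements merged into one kernel-verified Lean document; each statement's English description precedes it below -/
import Mathlib

section
/- For odd n ≥ 1, define F_n(h) := Σ_{k=0}^{h} ((C(n,k) - C(n,k-1))/C(n,h)) · ((n-k-h)/(n-2k)) for 0 ≤ h ≤ (n-1)/2. Then F_n(0) = 1 and F_n satisfies the recurrence F_n(h) = a(n,h)·F_n(h-1) + b(n,h) for 1 ≤ h ≤ (n-1)/2, where a(n,h) = (n-2h)h/((n-2h+2)(n-h+1)) and b(n,h) = (4h² - (4n+5)h + (n+1)(n+2))/((n-2h+2)(n-h+1)). -/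
def ch (n : ℕ) (j : ℤ) : ℚ := if j < 0 then 0 else (n.choose j.toNat : ℚ)

def Fid (n h : ℕ) : ℚ :=
  ∑ k ∈ Finset.range (h + 1),
    ((ch n k - ch n ((k : ℤ) - 1)) / (n.choose h : ℚ))
      * (((n : ℚ) - k - h) / ((n : ℚ) - 2 * k))

lemma ch_nat (n k : ℕ) : ch n (k : ℤ) = (n.choose k : ℚ) := by
  simp [ch]

def Asum (n h : ℕ) : ℚ :=
  ∑ k ∈ Finset.range (h + 1),
    (ch n (k : ℤ) - ch n ((k : ℤ) - 1)) / ((n : ℚ) - 2 * k)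

lemma sum_delta (n h : ℕ) :
    ∑ k ∈ Finset.range (h + 1), (ch n (k : ℤ) - ch n ((k : ℤ) - 1)) = ch n h := by
  induction h with
  | zero => simp [ch]
  | succ m ih =>
      rw [Finset.sum_range_succ, ih]
      have : ((m + 1 : ℕ) : ℤ) - 1 = (m : ℤ) := by push_cast; ring
      rw [this]; ring

lemma ne2 {n : ℕ} (hn : Odd n) (k : ℕ) : (n : ℚ) - 2 * k ≠ 0 := by
  intro hk
  have h1 : (n : ℚ) = ((2 * k : ℕ) : ℚ) := by push_cast; linarith
  have h2 : n = 2 * k := Nat.cast_injective h1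
  rcases hn with ⟨m, hm⟩; omega

lemma fid_eq (n h : ℕ) (hn : Odd n) (hh : h ≤ n) :
    Fid n h = ((n : ℚ) - 2 * h) / 2 * (Asum n h) / (n.choose h : ℚ) + 1 / 2 := by
  have hC : (n.choose h : ℚ) ≠ 0 := by
    exact_mod_cast (Nat.choose_pos hh).ne'
  have step : ∀ k ∈ Finset.range (h + 1),
      ((ch n k - ch n ((k : ℤ) - 1)) / (n.choose h : ℚ))
        * (((n : ℚ) - k - h) / ((n : ℚ) - 2 * k))
      = ((n : ℚ) - 2 * h) / 2 *
          ((ch n (k : ℤ) - ch n ((k : ℤ) - 1)) / ((n : ℚ) - 2 * k)) / (n.choose h : ℚ)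
        + (ch n (k : ℤ) - ch n ((k : ℤ) - 1)) / (2 * (n.choose h : ℚ)) := by
    intro k _
    have h2 := ne2 hn k
    have e : (n:ℚ) - k - h = ((n:ℚ) - 2*h)/2 + ((n:ℚ) - 2*k)/2 := by ring
    rw [e]
    generalize (n:ℚ) - 2*k = d at h2 ⊢
    field_simp
  rw [Fid, Finset.sum_congr rfl step, Finset.sum_add_distrib]
  have e1 : ∑ k ∈ Finset.range (h + 1),
      ((n : ℚ) - 2 * h) / 2 *
        ((ch n (k : ℤ) - ch n ((k : ℤ) - 1)) / ((n : ℚ) - 2 * k)) / (n.choose h : ℚ)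
      = ((n : ℚ) - 2 * h) / 2 * (Asum n h) / (n.choose h : ℚ) := by
    rw [Asum, Finset.mul_sum, Finset.sum_div]
  have e2 : ∑ k ∈ Finset.range (h + 1),
      (ch n (k : ℤ) - ch n ((k : ℤ) - 1)) / (2 * (n.choose h : ℚ)) = 1 / 2 := by
    rw [← Finset.sum_div, sum_delta, ch_nat]
    field_simp
  rw [e1, e2]

/-- For odd `n ≥ 1`: `F_n(0) = 1` and `F_n` satisfies the linear recurrence
`F_n(h) = a(n,h)·F_n(h-1) + b(n,h)` for `1 ≤ h ≤ (n-1)/2`, where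
`a(n,h) = (n-2h)h/((n-2h+2)(n-h+1))` and
`b(n,h) = (4h² - (4n+5)h + (n+1)(n+2))/((n-2h+2)(n-h+1))`. -/
theorem fid_recurrence (n : ℕ) (hn : Odd n) (hn1 : 1 ≤ n) :
    Fid n 0 = 1 ∧
    ∀ h : ℕ, 1 ≤ h → h ≤ (n - 1) / 2 →
      Fid n h
        = (((n : ℚ) - 2 * h) * h / ((((n : ℚ) - 2 * h + 2)) * ((n : ℚ) - h + 1)))
            * Fid n (h - 1)
          + (4 * (h : ℚ) ^ 2 - (4 * (n : ℚ) + 5) * h + ((n : ℚ) + 1) * ((n : ℚ) + 2))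
            / ((((n : ℚ) - 2 * h + 2)) * ((n : ℚ) - h + 1)) := by
  constructor
  · have hn0 : (n : ℚ) ≠ 0 := by exact_mod_cast (by omega : n ≠ 0)
    simp [Fid, ch]
    omega
  · rintro h hg1 hg2
    obtain ⟨g, rfl⟩ : ∃ g, h = g + 1 := ⟨h - 1, by omega⟩
    have hbound : 2 * g + 3 ≤ n := by
      rcases hn with ⟨m, hm⟩; omega
    have hgn : g + 1 ≤ n := by omega
    have hx : (2 * (g : ℚ) + 3) ≤ (n : ℚ) := by exact_mod_cast hbound
    have h1 : ((n : ℚ) - 2 * g - 2) ≠ 0 := by linarith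
    have h2 : ((n : ℚ) - 2 * g) ≠ 0 := by linarith
    have h3 : ((n : ℚ) - g) ≠ 0 := by
      have : (0:ℚ) ≤ g := by positivity
      linarith
    have h4 : ((g : ℚ) + 1) ≠ 0 := by positivity
    have hc : (n.choose g : ℚ) ≠ 0 := by
      exact_mod_cast (Nat.choose_pos (by omega : g ≤ n)).ne'
    have hcc : (n.choose (g+1) : ℚ) = (n.choose g : ℚ) * ((n : ℚ) - g) / ((g : ℚ) + 1) := by
      have := Nat.choose_succ_right_eq n g
      have hcast := congrArg (fun m : ℕ => (m : ℚ)) this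
      push_cast [Nat.cast_sub (by omega : g ≤ n)] at hcast
      field_simp
      linarith [hcast]
    have hA : Asum n (g+1) = Asum n g
        + (((n.choose (g+1) : ℚ)) - (n.choose g : ℚ)) / ((n : ℚ) - 2 * (g+1)) := by
      rw [Asum, Finset.sum_range_succ, ← Asum]
      have e1 : ((g + 1 : ℕ) : ℤ) - 1 = (g : ℤ) := by push_cast; ring
      rw [e1, ch_nat, ch_nat]
      push_cast
      ring
    simp only [Nat.add_sub_cancel]
    rw [fid_eq n (g+1) hn hgn, fid_eq n g hn (by omega)]
    push_cast at hA hcc ⊢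
    rw [hA, hcc]
    have hd1 : (n : ℚ) - 2 * ((g : ℚ) + 1) ≠ 0 := by intro hE; apply h1; linarith
    have hd2 : (n : ℚ) - 2 * ((g : ℚ) + 1) + 2 ≠ 0 := by intro hE; apply h2; linarith
    have hd3 : (n : ℚ) - ((g : ℚ) + 1) + 1 ≠ 0 := by intro hE; apply h3; linarith
    field_simp
    ring
end

section
/- For odd n ≥ 1 with h := (n-1)/2, the fidelity F_n(h) admits the rewriting F_n(h) = 1/2 + ((2δ+1)/2) · Σ_{k=0}^{h} (C(n,k)/C(n,h)) · (n-2k+1)/((n-k+1)(n-2k)) with δ = 0, and consequently satisfies the bounds 1/2 + (1/(2n·C(n,h))) Σ_{k=0}^{h} C(n,k) ≤ F_n(h) ≤ 1/2 + (2/(n·C(n,h))) Σ_{k=0}^{h} C(n,k). -/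
lemma ch_pred (n k : ℕ) (hk : k ≤ n) :
    ((n:ℚ) - k + 1) * ch n ((k:ℤ) - 1) = k * (n.choose k : ℚ) := by
  rcases k with _ | m
  · simp [ch]
  · have h1 : ((m+1:ℕ):ℤ) - 1 = (m:ℤ) := by push_cast; ring
    rw [h1, ch_nat]
    have h2 := Nat.choose_succ_right_eq n m
    have := congrArg (Nat.cast : ℕ → ℚ) h2
    push_cast [Nat.cast_sub (by omega : m ≤ n)] at this
    push_cast
    linarith [this]

lemma fid_telescope (n h : ℕ) :
    ∑ k ∈ Finset.range (h+1), (ch n (k:ℤ) - ch n ((k:ℤ)-1)) = (n.choose h : ℚ) := by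
  have := Finset.sum_range_sub (fun i : ℕ => ch n ((i:ℤ)-1)) (h+1)
  have e : ∀ k : ℕ, ch n (((k+1:ℕ):ℤ)-1) = ch n (k:ℤ) := by
    intro k
    congr 1
    push_cast; ring
  calc ∑ k ∈ Finset.range (h+1), (ch n (k:ℤ) - ch n ((k:ℤ)-1))
      = ∑ k ∈ Finset.range (h+1),
          ((fun i : ℕ => ch n ((i:ℤ)-1)) (k+1) - (fun i : ℕ => ch n ((i:ℤ)-1)) k) := by
        refine Finset.sum_congr rfl fun k _ => ?_
        simp only [e k]
    _ = ch n (((h+1:ℕ):ℤ)-1) - ch n (((0:ℕ):ℤ)-1) := this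
    _ = (n.choose h : ℚ) := by
        rw [e h, ch_nat]
        norm_num [ch]

/-- For odd `n ≥ 1` and `h = (n-1)/2` (i.e. `δ = 0`), the fidelity admits the
rewriting
`F_n(h) = 1/2 + (1/2) Σ_{k=0}^{h} (C(n,k)/C(n,h)) (n-2k+1)/((n-k+1)(n-2k))`
and consequently satisfies
`1/2 + (1/(2n C(n,h))) Σ_{k≤h} C(n,k) ≤ F_n(h) ≤ 1/2 + (2/(n C(n,h))) Σ_{k≤h} C(n,k)`. -/
theorem fid_central_rewriting_and_bounds (n : ℕ) (hn : Odd n) (hn1 : 1 ≤ n) :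
    Fid n ((n - 1) / 2)
        = 1 / 2 + (1 / 2) * ∑ k ∈ Finset.range ((n - 1) / 2 + 1),
            ((n.choose k : ℚ) / (n.choose ((n - 1) / 2) : ℚ))
              * (((n : ℚ) - 2 * k + 1) / ((((n : ℚ) - k + 1)) * ((n : ℚ) - 2 * k))) ∧
    1 / 2 + (1 / (2 * (n : ℚ) * (n.choose ((n - 1) / 2) : ℚ)))
        * ∑ k ∈ Finset.range ((n - 1) / 2 + 1), (n.choose k : ℚ)
      ≤ Fid n ((n - 1) / 2) ∧
    Fid n ((n - 1) / 2)
      ≤ 1 / 2 + (2 / ((n : ℚ) * (n.choose ((n - 1) / 2) : ℚ)))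
        * ∑ k ∈ Finset.range ((n - 1) / 2 + 1), (n.choose k : ℚ) := by
  obtain ⟨h, rfl⟩ := hn
  set n := 2*h+1 with hn2
  have hh : (n - 1) / 2 = h := by omega
  rw [hh]
  have hN : (n:ℚ) = 2*(h:ℚ)+1 := by rw [hn2]; push_cast; ring
  have hC : (0:ℚ) < (n.choose h : ℚ) := by
    exact_mod_cast Nat.choose_pos (by omega : h ≤ n)
  have hC' : (n.choose h : ℚ) ≠ 0 := ne_of_gt hC
  -- positivity facts for each k ≤ h
  have hd : ∀ k : ℕ, k ≤ h → (0:ℚ) < (n:ℚ) - 2*k := by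
    intro k hk
    have : (k:ℚ) ≤ h := by exact_mod_cast hk
    rw [hN]; linarith
  have he : ∀ k : ℕ, k ≤ h → (0:ℚ) < (n:ℚ) - k + 1 := by
    intro k hk
    have : (k:ℚ) ≤ h := by exact_mod_cast hk
    rw [hN]; linarith
  -- the main rewriting
  have key : Fid n h = 1 / 2 + (1 / 2) * ∑ k ∈ Finset.range (h + 1),
      ((n.choose k : ℚ) / (n.choose h : ℚ))
        * (((n : ℚ) - 2 * k + 1) / ((((n : ℚ) - k + 1)) * ((n : ℚ) - 2 * k))) := by
    have step : Fid n h = ∑ k ∈ Finset.range (h+1),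
        ((1/2) * ((ch n (k:ℤ) - ch n ((k:ℤ)-1)) / (n.choose h : ℚ))
          + (1/2) * (((n.choose k : ℚ) / (n.choose h : ℚ))
            * (((n : ℚ) - 2 * k + 1) / ((((n : ℚ) - k + 1)) * ((n : ℚ) - 2 * k))))) := by
      unfold Fid
      refine Finset.sum_congr rfl fun k hk => ?_
      have hk' : k ≤ h := Finset.mem_range_succ_iff.mp hk
      have hkq : (k:ℚ) ≤ h := by exact_mod_cast hk'
      have hd' := hd k hk'
      have he' := he k hk'
      have hb := ch_pred n k (by omega : k ≤ n)
      have hb' : ch n ((k:ℤ)-1) = (k:ℚ) * (n.choose k : ℚ) / ((n:ℚ) - k + 1) := by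
        field_simp
        linarith [hb]
      rw [ch_nat, hb']
      have hhk : (n:ℚ) - k - h = ((n:ℚ) - 2*k + 1) / 2 := by
        rw [hN]; ring
      rw [hhk]
      have h3 : (n:ℚ) - k * 2 ≠ 0 := by linarith
      field_simp
      ring_nf
    rw [step, Finset.sum_add_distrib, ← Finset.mul_sum, ← Finset.sum_div, fid_telescope,
      div_self hC', mul_one, ← Finset.mul_sum]
  refine ⟨key, ?_, ?_⟩
  · -- lower bound
    rw [key]
    have hterm : ∀ k ∈ Finset.range (h+1),
        ((n.choose k : ℚ) / (n.choose h : ℚ)) * (1/(n:ℚ))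
          ≤ ((n.choose k : ℚ) / (n.choose h : ℚ))
            * (((n : ℚ) - 2 * k + 1) / ((((n : ℚ) - k + 1)) * ((n : ℚ) - 2 * k))) := by
      intro k hk
      have hk' : k ≤ h := Finset.mem_range_succ_iff.mp hk
      have hkq : (k:ℚ) ≤ h := by exact_mod_cast hk'
      have hk0 : (0:ℚ) ≤ k := by positivity
      have hd' := hd k hk'
      have he' := he k hk'
      refine mul_le_mul_of_nonneg_left ?_ (by positivity)
      rw [div_le_div_iff₀ (by rw [hN]; linarith) (by positivity)]
      nlinarith [mul_nonneg hk0 hd'.le]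
    have := Finset.sum_le_sum hterm
    have hsum : ∑ k ∈ Finset.range (h+1),
        ((n.choose k : ℚ) / (n.choose h : ℚ)) * (1/(n:ℚ))
        = (1 / ((n:ℚ) * (n.choose h : ℚ))) * ∑ k ∈ Finset.range (h+1), (n.choose k : ℚ) := by
      rw [Finset.mul_sum]
      refine Finset.sum_congr rfl fun k _ => by ring
    rw [hsum] at this
    have hNpos : (0:ℚ) < n := by rw [hN]; positivity
    have : (1 / (2 * (n : ℚ) * (n.choose h : ℚ)))
        * ∑ k ∈ Finset.range (h+1), (n.choose k : ℚ)
        = (1/2) * ((1 / ((n:ℚ) * (n.choose h : ℚ)))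
          * ∑ k ∈ Finset.range (h+1), (n.choose k : ℚ)) := by ring
    rw [this]
    nlinarith [Finset.sum_le_sum hterm]
  · -- upper bound
    rw [key]
    have hterm : ∀ k ∈ Finset.range (h+1),
        ((n.choose k : ℚ) / (n.choose h : ℚ))
            * (((n : ℚ) - 2 * k + 1) / ((((n : ℚ) - k + 1)) * ((n : ℚ) - 2 * k)))
          ≤ ((n.choose k : ℚ) / (n.choose h : ℚ)) * (4/(n:ℚ)) := by
      intro k hk
      have hk' : k ≤ h := Finset.mem_range_succ_iff.mp hk
      have hkq : (k:ℚ) ≤ h := by exact_mod_cast hk'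
      have hk0 : (0:ℚ) ≤ k := by positivity
      have hd' := hd k hk'
      have he' := he k hk'
      have hd1 : (1:ℚ) ≤ (n:ℚ) - 2*k := by rw [hN]; linarith
      refine mul_le_mul_of_nonneg_left ?_ (by positivity)
      rw [div_le_div_iff₀ (by positivity) (by rw [hN]; linarith)]
      nlinarith [mul_nonneg hk0 hd'.le, mul_nonneg (sub_nonneg.2 hd1) (by rw [hN]; positivity : (0:ℚ) ≤ (n:ℚ)), sq_nonneg ((n:ℚ) - 2*k)]
    have hsum : ∑ k ∈ Finset.range (h+1),
        ((n.choose k : ℚ) / (n.choose h : ℚ)) * (4/(n:ℚ))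
        = (4 / ((n:ℚ) * (n.choose h : ℚ))) * ∑ k ∈ Finset.range (h+1), (n.choose k : ℚ) := by
      rw [Finset.mul_sum]
      refine Finset.sum_congr rfl fun k _ => by ring
    have hle := Finset.sum_le_sum hterm
    rw [hsum] at hle
    have : (2 / ((n : ℚ) * (n.choose h : ℚ)))
        * ∑ k ∈ Finset.range (h+1), (n.choose k : ℚ)
        = (1/2) * ((4 / ((n:ℚ) * (n.choose h : ℚ)))
          * ∑ k ∈ Finset.range (h+1), (n.choose k : ℚ)) := by ring
    rw [this]
    linarith
end
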